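/- Let S and A be types, f : S → A → S a deterministic transition function, R : S → A → ℝ a reward function with |R s a| ≤ Rmax for all s, a, and γ ∈ (0,1) a discount factor. For a stationary policy π : S → A define the trajectory map gπ : S → S by gπ s = f s (π s) and the value function V^π : S → ℝ by V^π s = ∑'_{t : ℕ} γ^t · R (gπ^[t] s) (π (gπ^[t] s)). Then for any two stationary policies π, π' : S → A and any s ∈ S, V^π s − V^{π'} s = ∑'_{t : ℕ} γ^t · (R (gπ^[t] s) (π (gπ^[t] s)) + γ · V^{π'} (gπ (gπ^[t] s)) − V^{π'} (gπ^[t] s)). -/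

import Mathlib

/-- Trajectory map of a stationary policy in a deterministic MDP. -/
def traj {S A : Type*} (f : S → A → S) (π : S → A) : S → S :=
  fun s => f s (π s)

/-- Discounted value function of a stationary policy in a deterministic MDP. -/
noncomputable def value {S A : Type*} (f : S → A → S) (R : S → A → ℝ) (γ : ℝ)
    (π : S → A) (s : S) : ℝ :=
  ∑' t : ℕ, γ ^ t * R ((traj f π)^[t] s) (π ((traj f π)^[t] s))

lemma summable_reward {S A : Type*} (f : S → A → S) (R : S → A → ℝ) (Rmax : ℝ)
    (hR : ∀ s a, |R s a| ≤ Rmax)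
    (γ : ℝ) (hγ0 : 0 < γ) (hγ1 : γ < 1) (π : S → A) (s : S) :
    Summable (fun t : ℕ => γ ^ t * R ((traj f π)^[t] s) (π ((traj f π)^[t] s))) := by
  apply Summable.of_norm_bounded (g := fun t : ℕ => Rmax * γ ^ t)
  · exact (summable_geometric_of_lt_one hγ0.le hγ1).mul_left Rmax
  · intro t
    rw [Real.norm_eq_abs, abs_mul, abs_pow, abs_of_pos hγ0, mul_comm]
    exact mul_le_mul_of_nonneg_right (hR _ _) (pow_nonneg hγ0.le t)

lemma abs_value_le {S A : Type*} (f : S → A → S) (R : S → A → ℝ) (Rmax : ℝ)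
    (hR : ∀ s a, |R s a| ≤ Rmax)
    (γ : ℝ) (hγ0 : 0 < γ) (hγ1 : γ < 1) (π : S → A) (s : S) :
    |value f R γ π s| ≤ Rmax / (1 - γ) := by
  set c : ℕ → ℝ := fun t : ℕ => γ ^ t * R ((traj f π)^[t] s) (π ((traj f π)^[t] s)) with hc
  have hsum : Summable c := summable_reward f R Rmax hR γ hγ0 hγ1 π s
  have hsum2 : Summable (fun t : ℕ => Rmax * γ ^ t) :=
    (summable_geometric_of_lt_one hγ0.le hγ1).mul_left Rmax
  have h1 : |∑' t, c t| ≤ ∑' t, |c t| := by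
    simpa [Real.norm_eq_abs] using norm_tsum_le_tsum_norm (f := c) (by simpa using hsum.abs)
  have h2 : ∑' t, |c t| ≤ ∑' t : ℕ, Rmax * γ ^ t := by
    refine Summable.tsum_le_tsum (fun t => ?_) hsum.abs hsum2
    rw [hc]
    simp only
    rw [abs_mul, abs_pow, abs_of_pos hγ0, mul_comm]
    exact mul_le_mul_of_nonneg_right (hR _ _) (pow_nonneg hγ0.le t)
  have h3 : ∑' t : ℕ, Rmax * γ ^ t = Rmax / (1 - γ) := by
    rw [tsum_mul_left, tsum_geometric_of_lt_one hγ0.le hγ1, div_eq_mul_inv]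
  have hv : value f R γ π s = ∑' t, c t := rfl
  rw [hv]
  linarith

/-- Performance-difference lemma for deterministic MDPs: the value gap between two
stationary policies equals the discounted sum, along the trajectory of `π`, of the
one-step advantage of `π`'s action with respect to the value function of `π'`. -/
theorem performance_difference
    {S A : Type*} (f : S → A → S) (R : S → A → ℝ) (Rmax : ℝ)
    (hR : ∀ s a, |R s a| ≤ Rmax)
    (γ : ℝ) (hγ0 : 0 < γ) (hγ1 : γ < 1)
    (π π' : S → A) (s : S) :
    value f R γ π s - value f R γ π' s
      = ∑' t : ℕ, γ ^ t *
          (R ((traj f π)^[t] s) (π ((traj f π)^[t] s))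
            + γ * value f R γ π' (traj f π ((traj f π)^[t] s))
            - value f R γ π' ((traj f π)^[t] s)) := by
  set g := traj f π with hg
  set a : ℕ → ℝ := fun t => γ ^ t * R (g^[t] s) (π (g^[t] s)) with ha_def
  set b : ℕ → ℝ := fun t => γ ^ t * value f R γ π' (g^[t] s) with hb_def
  have ha : Summable a := summable_reward f R Rmax hR γ hγ0 hγ1 π s
  have hb : Summable b := by
    apply Summable.of_norm_bounded (g := fun t : ℕ => (Rmax / (1 - γ)) * γ ^ t)
    · exact (summable_geometric_of_lt_one hγ0.le hγ1).mul_left _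
    · intro t
      rw [Real.norm_eq_abs, hb_def]
      simp only
      rw [abs_mul, abs_pow, abs_of_pos hγ0, mul_comm]
      exact mul_le_mul_of_nonneg_right
        (abs_value_le f R Rmax hR γ hγ0 hγ1 π' _) (pow_nonneg hγ0.le t)
  have hb' : Summable (fun t => b (t + 1)) := (summable_nat_add_iff 1).mpr hb
  have hterm : ∀ t : ℕ,
      γ ^ t * (R (g^[t] s) (π (g^[t] s)) + γ * value f R γ π' (g (g^[t] s))
        - value f R γ π' (g^[t] s)) = a t + b (t + 1) - b t := by
    intro t
    rw [hb_def, ha_def]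
    simp only
    rw [← Function.iterate_succ_apply' g t s]
    ring
  rw [tsum_congr hterm]
  rw [Summable.tsum_sub (ha.add hb') hb, Summable.tsum_add ha hb']
  have hshift : ∑' t, b t = b 0 + ∑' t, b (t + 1) := Summable.tsum_eq_zero_add hb
  have hb0 : b 0 = value f R γ π' s := by simp [hb_def]
  have hva : ∑' t, a t = value f R γ π s := rfl
  linarith
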